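/- arXiv:2311.01533 — 6 statements merged into one kernel-verified Lean document; each statement's English description precedes it below -/
import Mathlib

section
/- Let $\sigma > 0$, $\mu \in \mathbb{R}$, $q \in \mathbb{N}$, and define $x(t) = \frac{1}{\sigma\sqrt{2\pi}}\exp(-t^2/(2\sigma^2))\, e^{2\pi i \mu t}$. Then the truncation error of the cardinal series satisfies $\sup_{t \in \mathbb{R}} \Big| \sum_{n \in \mathbb{Z},\, |n| > q} x(n)\,\mathrm{sinc}(t-n) \Big| \le 2\exp\Big(-\tfrac{q^2}{2\sigma^2}\Big)$. -/
open scoped Real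

/-- Normalized cardinal sine: `sinc x = sin (π x) / (π x)` for `x ≠ 0`, `sinc 0 = 1`. -/
noncomputable def sinc (x : ℝ) : ℝ := if x = 0 then 1 else Real.sin (π * x) / (π * x)

lemma sinc_abs_le_one (y : ℝ) : |sinc y| ≤ 1 := by
  unfold sinc
  split_ifs with h
  · simp
  · rw [abs_div, div_le_one (abs_pos.2 (mul_ne_zero Real.pi_ne_zero h))]
    exact Real.abs_sin_le_abs


/-- Truncation error bound for the cardinal series of a Gaussian-windowed complex
exponential: the tail over `|n| > q` is uniformly bounded by `2 exp(-q²/(2σ²))`. -/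
theorem sinc_interpolation_truncation_error
    (σ : ℝ) (hσ : 0 < σ) (μ : ℝ) (q : ℕ)
    (x : ℝ → ℂ)
    (hx : ∀ t : ℝ, x t =
      ((1 / (σ * Real.sqrt (2 * π)) * Real.exp (-t ^ 2 / (2 * σ ^ 2)) : ℝ) : ℂ) *
        Complex.exp (2 * (π : ℂ) * Complex.I * (μ : ℂ) * (t : ℂ))) :
    (∀ t : ℝ, Summable fun n : {n : ℤ // (q : ℤ) < |n|} =>
      x ((n : ℤ) : ℝ) * ((sinc (t - ((n : ℤ) : ℝ)) : ℝ) : ℂ)) ∧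
    ∀ t : ℝ,
      ‖(∑' n : {n : ℤ // (q : ℤ) < |n|},
          x ((n : ℤ) : ℝ) * ((sinc (t - ((n : ℤ) : ℝ)) : ℝ) : ℂ))‖ ≤
        2 * Real.exp (-(q : ℝ) ^ 2 / (2 * σ ^ 2)) := by
  have h2σ : (0:ℝ) < 2 * σ ^ 2 := by positivity
  have hsqrt : (0:ℝ) < Real.sqrt (2 * π) := Real.sqrt_pos.2 (by positivity)
  set c : ℝ := 1 / (σ * Real.sqrt (2 * π)) with hc_def
  have hc : 0 < c := by positivity
  set g : ℤ → ℝ := fun n => c * Real.exp (-((n:ℝ)) ^ 2 / (2 * σ ^ 2)) with hg_def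
  have hg_pos : ∀ n, 0 < g n := fun n => by positivity
  have habs : ∀ n : ℤ, ‖x ((n:ℤ):ℝ)‖ = g n := by
    intro n
    rw [hx]
    rw [norm_mul, Complex.norm_real, Real.norm_eq_abs, Complex.norm_exp]
    have hre : (2 * (π:ℂ) * Complex.I * (μ:ℂ) * (((n:ℤ):ℝ):ℂ)).re = 0 := by
      simp [Complex.mul_re, Complex.mul_im]
    rw [hre, Real.exp_zero, mul_one, abs_of_pos (by positivity)]
  have hterm : ∀ (t : ℝ) (n : ℤ),
      ‖x ((n:ℤ):ℝ) * ((sinc (t - ((n:ℤ):ℝ)) : ℝ) : ℂ)‖ ≤ g n := by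
    intro t n
    rw [norm_mul, habs, Complex.norm_real, Real.norm_eq_abs]
    calc g n * |sinc (t - ((n:ℤ):ℝ))| ≤ g n * 1 :=
          mul_le_mul_of_nonneg_left (sinc_abs_le_one _) (hg_pos n).le
      _ = g n := mul_one _
  have hgeo : Summable fun k : ℕ => Real.exp (-(1 / (2 * σ ^ 2))) ^ k :=
    summable_geometric_of_lt_one (Real.exp_nonneg _)
      (Real.exp_lt_one_iff.2 (neg_lt_zero.2 (by positivity)))
  have hnat : Summable fun k : ℕ => Real.exp (-((k:ℝ)) ^ 2 / (2 * σ ^ 2)) := by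
    refine hgeo.of_nonneg_of_le (fun k => (Real.exp_pos _).le) (fun k => ?_)
    rw [← Real.exp_nat_mul]
    apply Real.exp_le_exp.2
    have hk : (k:ℝ) ≤ (k:ℝ) ^ 2 := by
      exact_mod_cast Nat.le_self_pow two_ne_zero k
    have h1 : (k:ℝ) * -(1 / (2 * σ ^ 2)) = -(k:ℝ) / (2 * σ ^ 2) := by ring
    rw [h1]
    gcongr
  -- summability of g over ℤ
  have hgZ : Summable g := by
    apply Summable.of_nat_of_neg
    · exact (hnat.mul_left c).congr fun k => by rw [hg_def]; push_cast; ring_nf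
    · refine (hnat.mul_left c).congr fun k => ?_
      rw [hg_def]; push_cast; ring_nf
  have hgS : Summable fun n : {n : ℤ // (q:ℤ) < |n|} => g ↑n := hgZ.subtype _
  have hnorm : ∀ t : ℝ, Summable fun n : {n : ℤ // (q:ℤ) < |n|} =>
      ‖x (((n:ℤ)):ℝ) * ((sinc (t - ((n:ℤ):ℝ)) : ℝ) : ℂ)‖ := fun t =>
    hgS.of_nonneg_of_le (fun n => norm_nonneg _) (fun n => hterm t n)
  have hsum : ∀ t : ℝ, Summable fun n : {n : ℤ // (q:ℤ) < |n|} =>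
      x (((n:ℤ)):ℝ) * ((sinc (t - ((n:ℤ):ℝ)) : ℝ) : ℂ) := fun t => (hnorm t).of_norm
  refine ⟨hsum, fun t => ?_⟩
  set E : ℝ := Real.exp (-(q : ℝ) ^ 2 / (2 * σ ^ 2)) with hE_def
  have hE : 0 < E := Real.exp_pos _
  set h : ℤ → ℝ := fun m => if m = 0 then 0 else E * g m with hh_def
  have hh_nonneg : ∀ m, 0 ≤ h m := by
    intro m; rw [hh_def]; dsimp only; split_ifs
    · exact le_refl 0
    · positivity
  -- the injection
  set e : {n : ℤ // (q:ℤ) < |n|} → ℤ :=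
    fun n => if 0 < (n:ℤ) then (n:ℤ) - q else (n:ℤ) + q with he_def
  have einj : Function.Injective e := by
    intro a b hab
    have ha := lt_abs.mp a.2
    have hb := lt_abs.mp b.2
    rw [he_def] at hab
    apply Subtype.ext
    dsimp only at hab
    split_ifs at hab <;> omega
  have key : ∀ n : {n : ℤ // (q:ℤ) < |n|}, g ↑n ≤ h (e n) := by
    intro n
    have hn := lt_abs.mp n.2
    have hq0 : (0:ℤ) ≤ q := Int.natCast_nonneg q
    have hne : e n ≠ 0 := by
      rw [he_def]; dsimp only; split_ifs <;> omega
    have hsq : (q:ℤ)^2 + (e n)^2 ≤ (n:ℤ)^2 := by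
      rw [he_def]; dsimp only; split_ifs with hp
      · nlinarith [hn.resolve_right (by omega : ¬ (q:ℤ) < -(n:ℤ))]
      · nlinarith [hn.resolve_left (by omega : ¬ (q:ℤ) < (n:ℤ))]
    have hsqR : ((q:ℝ))^2 + ((e n : ℤ):ℝ)^2 ≤ (((n:ℤ)):ℝ)^2 := by exact_mod_cast hsq
    have heq : h (e n) = E * g (e n) := by rw [hh_def]; exact if_neg hne
    rw [heq, hE_def, hg_def]
    dsimp only
    rw [← mul_assoc, mul_comm (Real.exp _) c, mul_assoc, ← Real.exp_add]
    apply mul_le_mul_of_nonneg_left _ hc.le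
    apply Real.exp_le_exp.2
    rw [← add_div, div_le_div_iff₀ h2σ h2σ]
    nlinarith [hsqR]
  -- summability of h
  have hhZ : Summable h := by
    refine (hgZ.mul_left E).of_nonneg_of_le hh_nonneg fun m => ?_
    rw [hh_def]; dsimp only; split_ifs
    · positivity
    · exact le_refl _
  -- the Gaussian integral bound
  have hI : ∫ x in Set.Ioi (0:ℝ), Real.exp (-(2*σ^2)⁻¹ * x^2) = σ * Real.sqrt (2*π) / 2 := by
    rw [integral_gaussian_Ioi]
    congr 1
    rw [show π / (2*σ^2)⁻¹ = σ^2 * (2*π) by field_simp]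
    rw [Real.sqrt_mul (sq_nonneg σ), Real.sqrt_sq hσ.le]
  set f : ℕ → ℝ := fun k => Real.exp (-((k:ℝ)+1)^2 / (2*σ^2)) with hf_def
  have hfsum : Summable f := by
    refine ((summable_nat_add_iff 1).mpr hnat).congr fun k => ?_
    rw [hf_def]; push_cast; ring_nf
  have hS : ∑' k : ℕ, f k ≤ σ * Real.sqrt (2*π) / 2 := by
    rw [← hI]
    apply Real.tsum_le_of_sum_range_le (fun k => (Real.exp_pos _).le)
    intro n
    have hanti : AntitoneOn (fun y:ℝ => Real.exp (-(2*σ^2)⁻¹ * y^2))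
        (Set.Icc (0:ℝ) (0 + n)) := by
      intro a ha b hb hab
      apply Real.exp_le_exp.2
      have h2 : a^2 ≤ b^2 := by nlinarith [ha.1]
      nlinarith [h2, (by positivity : (0:ℝ) < (2*σ^2)⁻¹)]
    have h1 : ∑ i ∈ Finset.range n, f i
        = ∑ i ∈ Finset.range n, (fun y:ℝ => Real.exp (-(2*σ^2)⁻¹ * y^2)) ((0:ℝ) + (i + 1 : ℕ)) := by
      refine Finset.sum_congr rfl fun i _ => ?_
      rw [hf_def]; push_cast; ring_nf
    rw [h1]
    refine le_trans hanti.sum_le_integral ?_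
    rw [zero_add, intervalIntegral.integral_of_le (by positivity)]
    apply MeasureTheory.setIntegral_mono_set
    · exact (integrable_exp_neg_mul_sq (by positivity)).integrableOn
    · exact Filter.Eventually.of_forall fun y => (Real.exp_pos _).le
    · exact HasSubset.Subset.eventuallyLE Set.Ioc_subset_Ioi_self
  -- compute the tsum of h over ℤ
  have hh1 : Summable fun k : ℕ => h ↑k := by
    refine (hnat.mul_left (E*c)).of_nonneg_of_le (fun k => hh_nonneg _) fun k => ?_
    rw [hh_def, hg_def]; dsimp only; split_ifs
    · positivity
    · push_cast
      exact le_of_eq (by ring)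
  have hh2 : Summable fun k : ℕ => h (-(↑k+1)) := by
    refine (((summable_nat_add_iff 1).mpr hnat).mul_left (E*c)).of_nonneg_of_le
      (fun k => hh_nonneg _) fun k => ?_
    rw [hh_def, hg_def]; dsimp only; split_ifs with hz
    · positivity
    · push_cast
      exact le_of_eq (by ring)
  have hval1 : ∑' k : ℕ, h ↑k = E * c * ∑' k : ℕ, f k := by
    rw [Summable.tsum_eq_zero_add hh1]
    have h0 : h ((0:ℕ):ℤ) = 0 := by rw [hh_def]; simp
    rw [h0, zero_add, ← tsum_mul_left]
    refine tsum_congr fun k => ?_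
    rw [hh_def, hg_def, hf_def]
    dsimp only
    split_ifs with hz
    · exact absurd hz (by omega)
    · push_cast; ring_nf
  have hval2 : ∑' k : ℕ, h (-(↑k+1)) = E * c * ∑' k : ℕ, f k := by
    rw [← tsum_mul_left]
    refine tsum_congr fun k => ?_
    rw [hh_def, hg_def, hf_def]
    dsimp only
    split_ifs with hz
    · exact absurd hz (by omega)
    · push_cast; ring_nf
  have hhZ_val : ∑' m : ℤ, h m ≤ E := by
    rw [tsum_of_nat_of_neg_add_one hh1 hh2, hval1, hval2]
    have hcσ : c * (σ * Real.sqrt (2*π)) = 1 := by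
      rw [hc_def]; field_simp
    nlinarith [hS, mul_pos hE hc, hE.le, hc.le,
      mul_nonneg (mul_nonneg hE.le hc.le) (tsum_nonneg fun k => (Real.exp_pos _).le : (0:ℝ) ≤ ∑' k:ℕ, f k)]
  -- final chain
  calc ‖(∑' n : {n : ℤ // (q:ℤ) < |n|},
          x (((n:ℤ)):ℝ) * ((sinc (t - ((n:ℤ):ℝ)) : ℝ) : ℂ))‖
      = ‖∑' n : {n : ℤ // (q:ℤ) < |n|},
          x (((n:ℤ)):ℝ) * ((sinc (t - ((n:ℤ):ℝ)) : ℝ) : ℂ)‖ := rfl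
    _ ≤ ∑' n : {n : ℤ // (q:ℤ) < |n|},
          ‖x (((n:ℤ)):ℝ) * ((sinc (t - ((n:ℤ):ℝ)) : ℝ) : ℂ)‖ := norm_tsum_le_tsum_norm (hnorm t)
    _ ≤ ∑' n : {n : ℤ // (q:ℤ) < |n|}, g ↑n := (hnorm t).tsum_le_tsum (fun n => hterm t n) hgS
    _ ≤ ∑' m : ℤ, h m := hgS.tsum_le_tsum_of_inj e einj (fun m _ => hh_nonneg m) key hhZ
    _ ≤ E := hhZ_val
    _ ≤ 2 * E := by linarith
end

section
/- Let $q \ge 1$ be an integer. For every $t \in [-q, q]$, $\sum_{n=-q}^{q} |\mathrm{sinc}(t - n)| \le 3 + \frac{2}{\pi}\log(2q)$. -/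
open scoped Real

lemma abs_sinc_le_one (x : ℝ) : |sinc x| ≤ 1 := by
  unfold sinc
  split_ifs with h
  · simp
  · rw [abs_div, div_le_one (abs_pos.mpr (mul_ne_zero Real.pi_ne_zero h))]
    exact Real.abs_sin_le_abs

lemma abs_sinc_le_inv (x : ℝ) (h : x ≠ 0) : |sinc x| ≤ 1 / (π * |x|) := by
  unfold sinc
  rw [if_neg h, abs_div, abs_mul, abs_of_pos Real.pi_pos]
  have hpos : 0 < π * |x| := by positivity
  exact div_le_div₀ zero_le_one (Real.abs_sin_le_one _) hpos le_rfl

lemma harmonic_cast_mono {m N : ℕ} (h : m ≤ N) : (harmonic m : ℝ) ≤ (harmonic N : ℝ) := by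
  have : harmonic m ≤ harmonic N := by
    apply Finset.sum_le_sum_of_subset_of_nonneg (Finset.range_subset_range.2 h)
    intro i _ _; positivity
  exact_mod_cast this

lemma sum_inv_left (a b : ℤ) (N : ℕ) (h : (b - a).toNat ≤ N) :
    ∑ n ∈ Finset.Ico a b, (1 : ℝ) / ((b : ℝ) - n) ≤ (harmonic N : ℝ) := by
  have key : ∑ n ∈ Finset.Ico a b, (1 : ℝ) / ((b : ℝ) - n)
      = ∑ i ∈ Finset.range (b - a).toNat, (1 : ℝ) / ((i : ℝ) + 1) := by
    refine Finset.sum_bij' (fun n _ => (b - 1 - n).toNat) (fun i _ => b - 1 - (i : ℤ))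
      ?_ ?_ ?_ ?_ ?_
    · intro n hn
      simp only [Finset.mem_Ico] at hn
      simp only [Finset.mem_range]; omega
    · intro i hi
      simp only [Finset.mem_range] at hi
      simp only [Finset.mem_Ico]; omega
    · intro n hn
      simp only [Finset.mem_Ico] at hn; omega
    · intro i hi
      simp only [Finset.mem_range] at hi; omega
    · intro n hn
      simp only [Finset.mem_Ico] at hn
      have h1 : ((b - 1 - n).toNat : ℤ) = b - 1 - n := by omega
      have h2 : (((b - 1 - n).toNat : ℕ) : ℝ) + 1 = (b : ℝ) - n := by
        have := congrArg (fun z : ℤ => (z : ℝ)) h1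
        push_cast at this ⊢
        linarith
      rw [h2]
  rw [key]
  have : ∑ i ∈ Finset.range (b - a).toNat, (1 : ℝ) / ((i : ℝ) + 1)
      = (harmonic (b - a).toNat : ℝ) := by
    unfold harmonic
    push_cast
    refine Finset.sum_congr rfl fun i _ => ?_
    rw [one_div]
  rw [this]
  exact harmonic_cast_mono h

lemma sum_inv_right (a b : ℤ) (N : ℕ) (h : (b - a).toNat ≤ N) :
    ∑ n ∈ Finset.Ico a b, (1 : ℝ) / ((n : ℝ) - (a : ℝ) + 1) ≤ (harmonic N : ℝ) := by
  have key : ∑ n ∈ Finset.Ico a b, (1 : ℝ) / ((n : ℝ) - (a : ℝ) + 1)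
      = ∑ i ∈ Finset.range (b - a).toNat, (1 : ℝ) / ((i : ℝ) + 1) := by
    refine Finset.sum_bij' (fun n _ => (n - a).toNat) (fun i _ => a + (i : ℤ))
      ?_ ?_ ?_ ?_ ?_
    · intro n hn
      simp only [Finset.mem_Ico] at hn
      simp only [Finset.mem_range]; omega
    · intro i hi
      simp only [Finset.mem_range] at hi
      simp only [Finset.mem_Ico]; omega
    · intro n hn
      simp only [Finset.mem_Ico] at hn; omega
    · intro i hi
      simp only [Finset.mem_range] at hi; omega
    · intro n hn
      simp only [Finset.mem_Ico] at hn
      have h1 : ((n - a).toNat : ℤ) = n - a := by omega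
      have h2 : (((n - a).toNat : ℕ) : ℝ) + 1 = (n : ℝ) - a + 1 := by
        have := congrArg (fun z : ℤ => (z : ℝ)) h1
        push_cast at this ⊢
        linarith
      rw [h2]
  rw [key]
  have : ∑ i ∈ Finset.range (b - a).toNat, (1 : ℝ) / ((i : ℝ) + 1)
      = (harmonic (b - a).toNat : ℝ) := by
    unfold harmonic
    push_cast
    refine Finset.sum_congr rfl fun i _ => ?_
    rw [one_div]
  rw [this]
  exact harmonic_cast_mono h

/-- `ℓ¹` bound on the cardinal sine interpolation weights: for `t ∈ [-q, q]`,
`∑_{n=-q}^{q} |sinc(t - n)| ≤ 3 + (2/π) log(2q)`. -/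
theorem sinc_weights_l1_bound
    (q : ℕ) (hq : 1 ≤ q) (t : ℝ) (ht : t ∈ Set.Icc (-(q : ℝ)) (q : ℝ)) :
    ∑ n ∈ Finset.Icc (-(q : ℤ)) (q : ℤ), |sinc (t - (n : ℝ))| ≤
      3 + (2 / π) * Real.log (2 * (q : ℝ)) := by
  obtain ⟨ht1, ht2⟩ := ht
  have hπ : (0:ℝ) < π := Real.pi_pos
  set k : ℤ := min ⌊t⌋ ((q : ℤ) - 1) with hkdef
  have hfloor_ge : -(q : ℤ) ≤ ⌊t⌋ := by
    rw [Int.le_floor]; push_cast; exact ht1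
  have hkq : -(q : ℤ) ≤ k := by
    have : (1:ℤ) ≤ (q:ℤ) := by exact_mod_cast hq
    omega
  have hkq2 : k ≤ (q : ℤ) - 1 := min_le_right _ _
  have hkt : (k : ℝ) ≤ t := by
    have h1 : k ≤ ⌊t⌋ := min_le_left _ _
    exact (Int.cast_le.mpr h1).trans (Int.floor_le t)
  have htk : t ≤ (k : ℝ) + 1 := by
    by_cases h : ⌊t⌋ ≤ (q : ℤ) - 1
    · have hk : k = ⌊t⌋ := min_eq_left h
      rw [hk]
      exact (Int.lt_floor_add_one t).le
    · have hk : k = (q : ℤ) - 1 := min_eq_right (le_of_not_ge h)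
      rw [hk]; push_cast; linarith
  -- split the sum
  have hIcc : Finset.Icc (-(q : ℤ)) (q : ℤ) = Finset.Ico (-(q : ℤ)) ((q : ℤ) + 1) := by
    ext n; simp [Int.lt_add_one_iff]
  have h1 : -(q : ℤ) ≤ k := hkq
  have h2 : k ≤ k + 2 := by omega
  have h3 : k + 2 ≤ (q : ℤ) + 1 := by omega
  have hd1 : Disjoint (Finset.Ico (-(q : ℤ)) k) (Finset.Ico k (k + 2) ∪ Finset.Ico (k + 2) ((q : ℤ) + 1)) := by
    rw [Finset.disjoint_left]
    intro a ha hb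
    simp only [Finset.mem_Ico, Finset.mem_union] at ha hb
    omega
  have hd2 : Disjoint (Finset.Ico k (k + 2)) (Finset.Ico (k + 2) ((q : ℤ) + 1)) := by
    rw [Finset.disjoint_left]
    intro a ha hb
    simp only [Finset.mem_Ico] at ha hb
    omega
  have hun : Finset.Icc (-(q : ℤ)) (q : ℤ)
      = Finset.Ico (-(q : ℤ)) k ∪ (Finset.Ico k (k + 2) ∪ Finset.Ico (k + 2) ((q : ℤ) + 1)) := by
    rw [Finset.Ico_union_Ico_eq_Ico h2 h3, Finset.Ico_union_Ico_eq_Ico h1 (h2.trans h3)]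
    exact hIcc
  rw [hun, Finset.sum_union hd1, Finset.sum_union hd2]
  set H : ℝ := (harmonic (2 * q) : ℝ) with hH
  -- middle bound
  have hmid : ∑ n ∈ Finset.Ico k (k + 2), |sinc (t - (n : ℝ))| ≤ 2 := by
    have := Finset.sum_le_card_nsmul (Finset.Ico k (k + 2))
      (fun n => |sinc (t - (n : ℝ))|) 1 (fun n _ => abs_sinc_le_one _)
    simpa [Int.card_Ico] using this
  -- left bound
  have hleft : ∑ n ∈ Finset.Ico (-(q : ℤ)) k, |sinc (t - (n : ℝ))|
      ≤ (1 / π) * H := by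
    have step : ∑ n ∈ Finset.Ico (-(q : ℤ)) k, |sinc (t - (n : ℝ))|
        ≤ ∑ n ∈ Finset.Ico (-(q : ℤ)) k, (1 / π) * (1 / ((k : ℝ) - n)) := by
      refine Finset.sum_le_sum fun n hn => ?_
      simp only [Finset.mem_Ico] at hn
      have hd : (1:ℝ) ≤ (k : ℝ) - n := by
        have : (n : ℝ) ≤ (k : ℝ) - 1 := by exact_mod_cast Int.le_sub_one_of_lt hn.2
        linarith
      have hgt : (0:ℝ) < t - n := by linarith
      calc |sinc (t - (n : ℝ))| ≤ 1 / (π * |t - n|) :=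
            abs_sinc_le_inv _ (ne_of_gt hgt)
        _ = 1 / (π * (t - n)) := by rw [abs_of_pos hgt]
        _ ≤ 1 / (π * ((k : ℝ) - n)) := by
            apply one_div_le_one_div_of_le
            · positivity
            · have : (k : ℝ) - n ≤ t - n := by linarith
              exact mul_le_mul_of_nonneg_left this hπ.le
        _ = (1 / π) * (1 / ((k : ℝ) - n)) := by
            rw [div_mul_eq_div_div_swap]; ring
    refine step.trans ?_
    rw [← Finset.mul_sum]
    refine mul_le_mul_of_nonneg_left ?_ (by positivity)
    exact sum_inv_left _ _ _ (by omega)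
  -- right bound
  have hright : ∑ n ∈ Finset.Ico (k + 2) ((q : ℤ) + 1), |sinc (t - (n : ℝ))|
      ≤ (1 / π) * H := by
    have step : ∑ n ∈ Finset.Ico (k + 2) ((q : ℤ) + 1), |sinc (t - (n : ℝ))|
        ≤ ∑ n ∈ Finset.Ico (k + 2) ((q : ℤ) + 1),
            (1 / π) * (1 / ((n : ℝ) - ((k : ℤ) + 2 : ℤ) + 1)) := by
      refine Finset.sum_le_sum fun n hn => ?_
      simp only [Finset.mem_Ico] at hn
      have hd : ((k : ℝ) + 2) ≤ (n : ℝ) := by exact_mod_cast hn.1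
      have hgt : (0:ℝ) < n - t := by linarith
      have hne : t - (n : ℝ) ≠ 0 := by intro h; rw [sub_eq_zero] at h; linarith
      calc |sinc (t - (n : ℝ))| ≤ 1 / (π * |t - n|) := abs_sinc_le_inv _ hne
        _ = 1 / (π * ((n : ℝ) - t)) := by
            rw [abs_sub_comm, abs_of_pos hgt]
        _ ≤ 1 / (π * ((n : ℝ) - ((k : ℝ) + 1))) := by
            apply one_div_le_one_div_of_le
            · have : (0:ℝ) < (n : ℝ) - ((k : ℝ) + 1) := by linarith
              positivity
            · have : (n : ℝ) - t ≥ (n : ℝ) - ((k : ℝ) + 1) := by linarith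
              exact mul_le_mul_of_nonneg_left this hπ.le
        _ = (1 / π) * (1 / ((n : ℝ) - ((k : ℤ) + 2 : ℤ) + 1)) := by
            push_cast
            rw [div_mul_eq_div_div_swap]; ring_nf
    refine step.trans ?_
    rw [← Finset.mul_sum]
    refine mul_le_mul_of_nonneg_left ?_ (by positivity)
    have h := sum_inv_right (k + 2) ((q : ℤ) + 1) (2 * q) (by omega)
    refine le_trans (le_of_eq (Finset.sum_congr rfl fun n hn => ?_)) h
    push_cast
    ring_nf
  -- harmonic bound
  have hHbound : H ≤ 1 + Real.log (2 * (q : ℝ)) := by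
    have h := harmonic_le_one_add_log (2 * q)
    rw [hH]
    push_cast at h
    exact h
  have hlog : (0:ℝ) ≤ Real.log (2 * (q : ℝ)) := by
    apply Real.log_nonneg
    have : (1:ℝ) ≤ (q:ℝ) := by exact_mod_cast hq
    linarith
  have hpi2 : (2:ℝ) ≤ π := Real.two_le_pi
  have hfin : (1 / π) * H + (2 + (1 / π) * H) ≤ 3 + (2 / π) * Real.log (2 * (q : ℝ)) := by
    have hHb : (1 / π) * H ≤ (1 / π) * (1 + Real.log (2 * (q : ℝ))) :=
      mul_le_mul_of_nonneg_left hHbound (by positivity)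
    have h2pi : (2 / π) ≤ 1 := by
      rw [div_le_one hπ]; linarith
    have : (2 / π) * (1 + Real.log (2 * (q : ℝ)))
        ≤ 1 + (2 / π) * Real.log (2 * (q : ℝ)) := by
      rw [mul_add, mul_one]
      exact add_le_add_left h2pi _
    have e : 2 * ((1 / π) * (1 + Real.log (2 * (q : ℝ))))
        = (2 / π) * (1 + Real.log (2 * (q : ℝ))) := by ring
    linarith
  calc ∑ n ∈ Finset.Ico (-(q : ℤ)) k, |sinc (t - (n : ℝ))|
        + (∑ n ∈ Finset.Ico k (k + 2), |sinc (t - (n : ℝ))|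
          + ∑ n ∈ Finset.Ico (k + 2) ((q : ℤ) + 1), |sinc (t - (n : ℝ))|)
      ≤ (1 / π) * H + (2 + (1 / π) * H) := by
        exact add_le_add hleft (add_le_add hmid hright)
    _ ≤ 3 + (2 / π) * Real.log (2 * (q : ℝ)) := hfin
end

section
/- Let $q \ge 1$ be an integer, let $E \ge 0$, and let $\epsilon_{-q}, \dots, \epsilon_{q} \in \mathbb{C}$ satisfy $|\epsilon_n| \le E$ for all $n$. Then for every $t \in [-q, q]$, $\Big| \sum_{n=-q}^{q} \epsilon_n\, \mathrm{sinc}(t - n) \Big| \le E\Big(3 + \frac{2}{\pi}\log(2q)\Big)$. -/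
open scoped Real

lemma abs_sinc_le_of_le {d x : ℝ} (hd : 0 < d) (h : d ≤ |x|) : |sinc x| ≤ 1 / π * d⁻¹ := by
  have hπ := Real.pi_pos
  have hx : x ≠ 0 := by
    intro h0
    rw [h0, abs_zero] at h
    linarith
  rw [sinc, if_neg hx, abs_div]
  have h2 : π * d ≤ |π * x| := by
    rw [abs_mul, abs_of_pos hπ]
    nlinarith [abs_nonneg x]
  calc |Real.sin (π * x)| / |π * x| ≤ 1 / (π * d) :=
      div_le_div₀ zero_le_one (Real.abs_sin_le_one _) (by positivity) h2
    _ = 1 / π * d⁻¹ := by field_simp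

lemma sum_inv_Ioc_eq_harmonic (n : ℕ) :
    ∑ j ∈ Finset.Ioc (0:ℤ) (n:ℤ), ((j:ℝ))⁻¹ = (harmonic n : ℝ) := by
  induction n with
  | zero => simp [harmonic]
  | succ n ih =>
    have hins : Finset.Ioc (0:ℤ) ((n+1:ℕ):ℤ) = insert ((n:ℤ)+1) (Finset.Ioc (0:ℤ) (n:ℤ)) := by
      ext x
      simp only [Finset.mem_Ioc, Finset.mem_insert]
      omega
    rw [hins, Finset.sum_insert (by simp), ih, harmonic_succ]
    push_cast
    ring

lemma sum_inv_Ioc_le {m N : ℤ} (hN : 1 ≤ N) (hm : m ≤ N) :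
    ∑ j ∈ Finset.Ioc (0:ℤ) m, ((j:ℝ))⁻¹ ≤ 1 + Real.log N := by
  have hlogN : (0:ℝ) ≤ Real.log N := Real.log_nonneg (by exact_mod_cast hN)
  rcases le_or_gt m 0 with h | h
  · rw [Finset.Ioc_eq_empty (by omega)]
    simp
    linarith
  · obtain ⟨n, rfl⟩ : ∃ n : ℕ, m = (n:ℤ) := ⟨m.toNat, by omega⟩
    rw [sum_inv_Ioc_eq_harmonic]
    refine (harmonic_le_one_add_log n).trans ?_
    have h1 : (1:ℝ) ≤ (n:ℝ) := by exact_mod_cast h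
    have : Real.log n ≤ Real.log N := by
      apply Real.log_le_log (by linarith)
      exact_mod_cast hm
    linarith

lemma sinc_l1_bound (q : ℕ) (hq : 1 ≤ q) (t : ℝ) (ht1 : -(q:ℝ) ≤ t) (ht2 : t ≤ (q:ℝ)) :
    ∑ n ∈ Finset.Icc (-(q:ℤ)) (q:ℤ), |sinc (t - (n:ℝ))| ≤
      3 + (2 / π) * Real.log (2 * (q : ℝ)) := by
  have hπ := Real.pi_pos
  have hq1 : (1:ℝ) ≤ (q:ℝ) := by exact_mod_cast hq
  set Q : ℤ := (q:ℤ) with hQdef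
  have hQR : ((Q:ℤ):ℝ) = (q:ℝ) := by rw [hQdef]; push_cast; ring
  obtain ⟨k, hk1, hk2, hkt, hkt2⟩ :
      ∃ k : ℤ, -Q ≤ k ∧ k ≤ Q ∧ (k:ℝ) ≤ t ∧ t < (k:ℝ) + 1 := by
    refine ⟨⌊t⌋, Int.le_floor.mpr (by rw [hQdef]; push_cast; linarith), ?_,
      Int.floor_le t, Int.lt_floor_add_one t⟩
    have : ((⌊t⌋:ℤ):ℝ) ≤ (Q:ℝ) := by rw [hQR]; linarith [Int.floor_le t]
    exact_mod_cast this
  have hlog : (0:ℝ) ≤ Real.log (2*(q:ℝ)) := Real.log_nonneg (by linarith)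
  have h2pi : 2/π ≤ 1 := by rw [div_le_one hπ]; linarith [Real.two_le_pi]
  have hN : ((2*Q : ℤ):ℝ) = 2*(q:ℝ) := by rw [hQdef]; push_cast; ring
  have Hb : ∀ m : ℤ, m ≤ 2*Q → ∑ j ∈ Finset.Ioc (0:ℤ) m, ((j:ℝ))⁻¹ ≤
      1 + Real.log (2*(q:ℝ)) := by
    intro m hm
    have h1 : (1:ℤ) ≤ 2*Q := by omega
    have := sum_inv_Ioc_le h1 hm
    rwa [hN] at this
  -- pointwise bounds on the two tails
  have hLpt : ∀ n ∈ Finset.Ioc (-Q-1) (k-1),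
      |sinc (t - (n:ℝ))| ≤ 1/π * (((k - n : ℤ)):ℝ)⁻¹ := by
    intro n hn
    simp only [Finset.mem_Ioc] at hn
    have hd : (0:ℝ) < ((k-n:ℤ):ℝ) := by exact_mod_cast (show (0:ℤ) < k - n by omega)
    apply abs_sinc_le_of_le hd
    have hnk : ((n:ℤ):ℝ) ≤ (k:ℝ) - 1 := by exact_mod_cast (show (n:ℤ) ≤ k - 1 by omega)
    rw [abs_of_pos (by push_cast at hnk ⊢; linarith)]
    push_cast
    linarith
  have hRpt : ∀ n ∈ Finset.Ioc (k+1) Q,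
      |sinc (t - (n:ℝ))| ≤ 1/π * (((n - k - 1 : ℤ)):ℝ)⁻¹ := by
    intro n hn
    simp only [Finset.mem_Ioc] at hn
    have hd : (0:ℝ) < ((n-k-1:ℤ):ℝ) := by exact_mod_cast (show (0:ℤ) < n - k - 1 by omega)
    apply abs_sinc_le_of_le hd
    have hnk : (k:ℝ) + 2 ≤ ((n:ℤ):ℝ) := by exact_mod_cast (show k + 2 ≤ (n:ℤ) by omega)
    rw [abs_of_neg (by push_cast at hnk ⊢; linarith)]
    push_cast
    linarith
  -- tail sums
  have hA : ∑ n ∈ Finset.Ioc (-Q-1) (k-1), |sinc (t - (n:ℝ))| ≤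
      1/π * (1 + Real.log (2*(q:ℝ))) := by
    calc ∑ n ∈ Finset.Ioc (-Q-1) (k-1), |sinc (t - (n:ℝ))|
        ≤ ∑ n ∈ Finset.Ioc (-Q-1) (k-1), 1/π * (((k - n : ℤ)):ℝ)⁻¹ :=
          Finset.sum_le_sum hLpt
      _ = 1/π * ∑ j ∈ Finset.Ioc (0:ℤ) (k+Q), ((j:ℝ))⁻¹ := by
          rw [← Finset.mul_sum]
          congr 1
          refine Finset.sum_nbij' (i := fun n => k - n) (j := fun j => k - j)
            ?_ ?_ ?_ ?_ ?_
          · intro a ha; simp only [Finset.mem_Ioc] at *; omega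
          · intro a ha; simp only [Finset.mem_Ioc] at *; omega
          · intro a _; omega
          · intro a _; omega
          · intro a _; rfl
      _ ≤ 1/π * (1 + Real.log (2*(q:ℝ))) := by
          have := Hb (k+Q) (by omega)
          have h1π : (0:ℝ) ≤ 1/π := by positivity
          nlinarith
  have hC : ∑ n ∈ Finset.Ioc (k+1) Q, |sinc (t - (n:ℝ))| ≤
      1/π * (1 + Real.log (2*(q:ℝ))) := by
    calc ∑ n ∈ Finset.Ioc (k+1) Q, |sinc (t - (n:ℝ))|
        ≤ ∑ n ∈ Finset.Ioc (k+1) Q, 1/π * (((n - k - 1 : ℤ)):ℝ)⁻¹ :=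
          Finset.sum_le_sum hRpt
      _ = 1/π * ∑ j ∈ Finset.Ioc (0:ℤ) (Q-k-1), ((j:ℝ))⁻¹ := by
          rw [← Finset.mul_sum]
          congr 1
          refine Finset.sum_nbij' (i := fun n => n - k - 1) (j := fun j => j + k + 1)
            ?_ ?_ ?_ ?_ ?_
          · intro a ha; simp only [Finset.mem_Ioc] at *; omega
          · intro a ha; simp only [Finset.mem_Ioc] at *; omega
          · intro a _; omega
          · intro a _; omega
          · intro a _; rfl
      _ ≤ 1/π * (1 + Real.log (2*(q:ℝ))) := by
          have := Hb (Q-k-1) (by omega)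
          have h1π : (0:ℝ) ≤ 1/π := by positivity
          nlinarith
  have hIcc : Finset.Icc (-Q) Q = Finset.Ioc (-Q-1) Q := by
    ext x; simp only [Finset.mem_Icc, Finset.mem_Ioc]; omega
  rw [hIcc]
  have hpi_eq : 1/π * (1 + Real.log (2*(q:ℝ))) ≤ 1/2 + 1/π * Real.log (2*(q:ℝ)) := by
    have : 1/π ≤ 1/2 := by
      rw [div_le_div_iff₀ hπ (by norm_num)]
      linarith [Real.two_le_pi]
    nlinarith [hlog]
  rcases le_or_gt (k+1) Q with hc | hc
  · -- middle has two points
    have hM : ∑ n ∈ Finset.Ioc (k-1) (k+1), |sinc (t - (n:ℝ))| ≤ 2 := by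
      have hset : Finset.Ioc (k-1) (k+1) = {k, k+1} := by
        ext x; simp only [Finset.mem_Ioc, Finset.mem_insert, Finset.mem_singleton]; omega
      rw [hset, Finset.sum_insert (by simp), Finset.sum_singleton]
      linarith [abs_sinc_le_one (t - (k:ℝ)), abs_sinc_le_one (t - ((k+1:ℤ):ℝ))]
    have e1 : ∑ n ∈ Finset.Ioc (-Q-1) Q, |sinc (t - (n:ℝ))| =
        (∑ n ∈ Finset.Ioc (-Q-1) (k-1), |sinc (t - (n:ℝ))| +
          ∑ n ∈ Finset.Ioc (k-1) (k+1), |sinc (t - (n:ℝ))|) +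
          ∑ n ∈ Finset.Ioc (k+1) Q, |sinc (t - (n:ℝ))| := by
      rw [← Finset.sum_union (by rw [Finset.disjoint_left]; intro a ha hb; simp only [Finset.mem_Ioc] at ha hb; omega),
        Finset.Ioc_union_Ioc_eq_Ioc (by omega) (by omega),
        ← Finset.sum_union (by rw [Finset.disjoint_left]; intro a ha hb; simp only [Finset.mem_Ioc] at ha hb; omega),
        Finset.Ioc_union_Ioc_eq_Ioc (by omega) hc]
    rw [e1]
    have h3 : (2:ℝ)/π * Real.log (2*(q:ℝ)) =
        1/π * Real.log (2*(q:ℝ)) + 1/π * Real.log (2*(q:ℝ)) := by ring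
    linarith [hA, hM, hC, hpi_eq]
  · -- k = Q : middle has one point, no right tail
    have hkQ : k = Q := by omega
    have hM : ∑ n ∈ Finset.Ioc (k-1) Q, |sinc (t - (n:ℝ))| ≤ 1 := by
      have hset : Finset.Ioc (k-1) Q = {Q} := by
        ext x; simp only [Finset.mem_Ioc, Finset.mem_singleton]; omega
      rw [hset, Finset.sum_singleton]
      exact abs_sinc_le_one _
    have e1 : ∑ n ∈ Finset.Ioc (-Q-1) Q, |sinc (t - (n:ℝ))| =
        ∑ n ∈ Finset.Ioc (-Q-1) (k-1), |sinc (t - (n:ℝ))| +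
          ∑ n ∈ Finset.Ioc (k-1) Q, |sinc (t - (n:ℝ))| := by
      rw [← Finset.sum_union (by rw [Finset.disjoint_left]; intro a ha hb; simp only [Finset.mem_Ioc] at ha hb; omega),
        Finset.Ioc_union_Ioc_eq_Ioc (by omega) (by omega)]
    rw [e1]
    have h2 : (0:ℝ) ≤ 1/π * Real.log (2*(q:ℝ)) := by positivity
    have h3 : 1/π * Real.log (2*(q:ℝ)) + 1/π * Real.log (2*(q:ℝ)) = 2/π * Real.log (2*(q:ℝ)) := by
      ring
    linarith [hA, hM, hpi_eq]

/-- Uncertainty propagation through cardinal sine interpolation: if the error vector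
`ε` satisfies `|ε n| ≤ E` for `-q ≤ n ≤ q`, then the propagated error at any
`t ∈ [-q, q]` is at most `E (3 + (2/π) log(2q))`. -/
theorem sinc_uncertainty_propagation
    (q : ℕ) (hq : 1 ≤ q) (E : ℝ) (hE : 0 ≤ E)
    (ε : ℤ → ℂ) (hε : ∀ n ∈ Finset.Icc (-(q : ℤ)) (q : ℤ), ‖ε n‖ ≤ E)
    (t : ℝ) (ht : t ∈ Set.Icc (-(q : ℝ)) (q : ℝ)) :
    ‖∑ n ∈ Finset.Icc (-(q : ℤ)) (q : ℤ),
        ε n * ((sinc (t - (n : ℝ)) : ℝ) : ℂ)‖ ≤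
      E * (3 + (2 / π) * Real.log (2 * (q : ℝ))) := by
  obtain ⟨ht1, ht2⟩ := ht
  calc ‖∑ n ∈ Finset.Icc (-(q : ℤ)) (q : ℤ),
        ε n * ((sinc (t - (n : ℝ)) : ℝ) : ℂ)‖
      ≤ ∑ n ∈ Finset.Icc (-(q : ℤ)) (q : ℤ),
          ‖ε n * ((sinc (t - (n : ℝ)) : ℝ) : ℂ)‖ :=
        norm_sum_le _ _
    _ ≤ ∑ n ∈ Finset.Icc (-(q : ℤ)) (q : ℤ), E * |sinc (t - (n : ℝ))| := by
        refine Finset.sum_le_sum fun n hn => ?_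
        rw [norm_mul, Complex.norm_real, Real.norm_eq_abs]
        exact mul_le_mul_of_nonneg_right (hε n hn) (abs_nonneg _)
    _ = E * ∑ n ∈ Finset.Icc (-(q : ℤ)) (q : ℤ), |sinc (t - (n : ℝ))| := by
        rw [Finset.mul_sum]
    _ ≤ E * (3 + (2 / π) * Real.log (2 * (q : ℝ))) :=
        mul_le_mul_of_nonneg_left (sinc_l1_bound q hq t ht1 ht2) hE
end

section
/- For every integer $q \ge 0$ and every $t \in \mathbb{R}$, $\sum_{n=-q}^{q} \mathrm{sinc}^2(t - n) \le 3 + \frac{4}{\pi^2}$. -/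
open scoped Real

lemma sinc_sq_le_one (x : ℝ) : sinc x ^ 2 ≤ 1 := by
  rcases eq_or_ne x 0 with h | h
  · simp [sinc, h]
  · have hne : π * x ≠ 0 := mul_ne_zero Real.pi_ne_zero h
    rw [sinc, if_neg h, div_pow, div_le_one (by positivity)]
    exact Real.sin_sq_le_sq

lemma sinc_sq_le_inv {x b : ℝ} (hb : 0 < b) (h : b ≤ |x|) :
    sinc x ^ 2 ≤ 1 / (π ^ 2 * b ^ 2) := by
  have hx : x ≠ 0 := by
    intro h0; rw [h0, abs_zero] at h; linarith
  have hπ := Real.pi_pos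
  have hx2 : b ^ 2 ≤ x ^ 2 := by nlinarith [sq_abs x, abs_nonneg x]
  have hs : Real.sin (π * x) ^ 2 ≤ 1 := by
    nlinarith [Real.neg_one_le_sin (π * x), Real.sin_le_one (π * x)]
  rw [sinc, if_neg hx, div_pow]
  have h2 : (π * x) ^ 2 = π ^ 2 * x ^ 2 := by ring
  rw [h2]
  calc Real.sin (π * x) ^ 2 / (π ^ 2 * x ^ 2) ≤ 1 / (π ^ 2 * x ^ 2) := by gcongr
  _ ≤ 1 / (π ^ 2 * b ^ 2) := by
        apply div_le_div_of_nonneg_left (by norm_num) (by positivity)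
        gcongr

lemma basel_aux : HasSum (fun j : ℕ => 1 / (π ^ 2 * (j : ℝ) ^ 2)) (1 / 6) := by
  have h := hasSum_zeta_two.div_const (π ^ 2)
  have hπ : (π : ℝ) ^ 2 ≠ 0 := by positivity
  have h6 : π ^ 2 / 6 / π ^ 2 = (1 : ℝ) / 6 := by field_simp
  rw [h6] at h
  convert h using 2 with j
  case e'_3 => rfl
  ring

/-- Squared `ℓ²` bound on the cardinal sine interpolation weights:
`∑_{n=-q}^{q} sinc²(t - n) ≤ 3 + 4/π²` for every real `t`. -/
theorem sinc_weights_l2_sq_bound (q : ℕ) (t : ℝ) :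
    ∑ n ∈ Finset.Icc (-(q : ℤ)) (q : ℤ), (sinc (t - (n : ℝ))) ^ 2 ≤ 3 + 4 / π ^ 2 := by
  have hπ := Real.pi_pos
  set m : ℤ := ⌊t⌋ with hm
  have hm1 : (m : ℝ) ≤ t := Int.floor_le t
  have hm2 : t < m + 1 := Int.lt_floor_add_one t
  set f : ℤ → ℝ := fun n => (sinc (t - (n : ℝ))) ^ 2 with hf
  set g : ℕ → ℝ := fun j => 1 / (π ^ 2 * (j : ℝ) ^ 2) with hg
  set T := Finset.Icc (-(q : ℤ)) (q : ℤ) with hT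
  set A := T.filter (fun n => n < m) with hA
  set B' := T.filter (fun n => ¬ n < m) with hB'
  set B := B'.filter (fun n => m + 1 < n) with hB
  set C := B'.filter (fun n => ¬ m + 1 < n) with hC
  have hsplit : ∑ n ∈ T, f n = ∑ n ∈ A, f n + (∑ n ∈ B, f n + ∑ n ∈ C, f n) := by
    rw [← Finset.sum_filter_add_sum_filter_not T (fun n => n < m) f,
        ← Finset.sum_filter_add_sum_filter_not B' (fun n => m + 1 < n) f]
  -- tail sums bounded via images into ℕ
  have hgnn : ∀ j : ℕ, 0 ≤ g j := fun j => by positivity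
  have htsum : ∑' j : ℕ, g j = 1 / 6 := basel_aux.tsum_eq
  have himgbound : ∀ s : Finset ℕ, ∑ j ∈ s, g j ≤ 1 / 6 := by
    intro s
    calc ∑ j ∈ s, g j ≤ ∑' j : ℕ, g j :=
          Summable.sum_le_tsum s (fun j _ => hgnn j) basel_aux.summable
    _ = 1 / 6 := htsum
  -- lower tail
  have hAle : ∑ n ∈ A, f n ≤ 1 / 6 := by
    have hpt : ∀ n ∈ A, f n ≤ g ((m - n).toNat) := by
      intro n hn
      rw [hA, Finset.mem_filter] at hn
      have h1 : (1 : ℤ) ≤ m - n := by omega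
      have hcast : (((m - n).toNat : ℝ)) = (m : ℝ) - (n : ℝ) := by
        have h0 : ((m - n).toNat : ℤ) = m - n := Int.toNat_of_nonneg (by omega)
        have := congrArg (fun z : ℤ => (z : ℝ)) h0
        push_cast at this
        linarith
      have hb : (0 : ℝ) < (m : ℝ) - (n : ℝ) := by
        have : (1 : ℝ) ≤ (m : ℝ) - (n : ℝ) := by exact_mod_cast h1
        linarith
      have habs : (m : ℝ) - (n : ℝ) ≤ |t - (n : ℝ)| := by
        have : (m : ℝ) - (n : ℝ) ≤ t - (n : ℝ) := by linarith
        exact this.trans (le_abs_self _)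
      have := sinc_sq_le_inv hb habs
      show (sinc (t - (n : ℝ))) ^ 2 ≤ 1 / (π ^ 2 * (((m - n).toNat : ℝ)) ^ 2)
      rw [hcast]
      exact this
    calc ∑ n ∈ A, f n ≤ ∑ n ∈ A, g ((m - n).toNat) := Finset.sum_le_sum hpt
    _ = ∑ j ∈ A.image (fun n => (m - n).toNat), g j := by
          rw [Finset.sum_image]
          intro x hx y hy hxy
          rw [hA, Finset.mem_coe, Finset.mem_filter] at hx hy
          simp only at hxy
          omega
    _ ≤ 1 / 6 := himgbound _
  -- upper tail
  have hBle : ∑ n ∈ B, f n ≤ 1 / 6 := by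
    have hpt : ∀ n ∈ B, f n ≤ g ((n - m - 1).toNat) := by
      intro n hn
      rw [hB, Finset.mem_filter, hB', Finset.mem_filter] at hn
      have h1 : (1 : ℤ) ≤ n - m - 1 := by omega
      have hcast : (((n - m - 1).toNat : ℝ)) = (n : ℝ) - (m : ℝ) - 1 := by
        have h0 : ((n - m - 1).toNat : ℤ) = n - m - 1 := Int.toNat_of_nonneg (by omega)
        have := congrArg (fun z : ℤ => (z : ℝ)) h0
        push_cast at this
        linarith
      have hb : (0 : ℝ) < (n : ℝ) - (m : ℝ) - 1 := by
        have : (1 : ℝ) ≤ (n : ℝ) - (m : ℝ) - 1 := by exact_mod_cast h1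
        linarith
      have habs : (n : ℝ) - (m : ℝ) - 1 ≤ |t - (n : ℝ)| := by
        have h2 : (n : ℝ) - (m : ℝ) - 1 ≤ (n : ℝ) - t := by linarith
        calc (n : ℝ) - (m : ℝ) - 1 ≤ (n : ℝ) - t := h2
        _ ≤ |(n : ℝ) - t| := le_abs_self _
        _ = |t - (n : ℝ)| := abs_sub_comm _ _
      have := sinc_sq_le_inv hb habs
      show (sinc (t - (n : ℝ))) ^ 2 ≤ 1 / (π ^ 2 * (((n - m - 1).toNat : ℝ)) ^ 2)
      rw [hcast]
      exact this
    calc ∑ n ∈ B, f n ≤ ∑ n ∈ B, g ((n - m - 1).toNat) := Finset.sum_le_sum hpt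
    _ = ∑ j ∈ B.image (fun n => (n - m - 1).toNat), g j := by
          rw [Finset.sum_image]
          intro x hx y hy hxy
          rw [hB, Finset.mem_coe, Finset.mem_filter, hB', Finset.mem_filter] at hx hy
          simp only at hxy
          omega
    _ ≤ 1 / 6 := himgbound _
  -- middle
  have hCle : ∑ n ∈ C, f n ≤ 2 := by
    have hsub : C ⊆ Finset.Icc m (m + 1) := by
      intro n hn
      rw [hC, Finset.mem_filter, hB', Finset.mem_filter] at hn
      rw [Finset.mem_Icc]
      omega
    have hcard : C.card ≤ 2 := by
      have := Finset.card_le_card hsub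
      rwa [Int.card_Icc, show (m + 1 + 1 - m).toNat = 2 by omega] at this
    calc ∑ n ∈ C, f n ≤ ∑ _n ∈ C, (1 : ℝ) :=
          Finset.sum_le_sum (fun n _ => sinc_sq_le_one _)
    _ = (C.card : ℝ) := by simp
    _ ≤ 2 := by exact_mod_cast hcard
  have hpos : (0 : ℝ) ≤ 4 / π ^ 2 := by positivity
  calc ∑ n ∈ T, f n = ∑ n ∈ A, f n + (∑ n ∈ B, f n + ∑ n ∈ C, f n) := hsplit
  _ ≤ 1 / 6 + (1 / 6 + 2) := by gcongr
  _ ≤ 3 + 4 / π ^ 2 := by linarith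
end

section
/- For every $\sigma > 0$ and every integer $q \ge 0$, $\sum_{n \in \mathbb{Z},\, |n| \ge q+1} \frac{1}{\sigma\sqrt{2\pi}}\exp\Big(-\frac{n^2}{2\sigma^2}\Big) \le \exp\Big(-\frac{q^2}{2\sigma^2}\Big)$. -/
open scoped Real

noncomputable def gaussWeight (σ : ℝ) : ℤ → ℝ :=
  fun n => (1 / (σ * Real.sqrt (2 * π))) * Real.exp (-((n:ℝ))^2 / (2*σ^2))

noncomputable def gaussTail (σ : ℝ) (q : ℕ) : ℤ → ℝ :=
  Set.indicator {n : ℤ | (q : ℤ) + 1 ≤ |n|} (gaussWeight σ)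

lemma gaussWeight_nonneg (σ : ℝ) (hσ : 0 < σ) (n : ℤ) : 0 ≤ gaussWeight σ n := by
  have hπ : (0:ℝ) < π := Real.pi_pos
  unfold gaussWeight
  positivity

lemma gaussTail_nonneg (σ : ℝ) (hσ : 0 < σ) (q : ℕ) (n : ℤ) : 0 ≤ gaussTail σ q n :=
  Set.indicator_nonneg (fun m _ => gaussWeight_nonneg σ hσ m) n

lemma gaussTail_le (σ : ℝ) (hσ : 0 < σ) (q : ℕ) (n : ℤ) : gaussTail σ q n ≤ gaussWeight σ n :=
  Set.indicator_le_self' (fun m _ => gaussWeight_nonneg σ hσ m) n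

lemma gaussTail_even (σ : ℝ) (q : ℕ) (n : ℤ) : gaussTail σ q (-n) = gaussTail σ q n := by
  unfold gaussTail
  have hmem : (-n) ∈ {n : ℤ | (q : ℤ) + 1 ≤ |n|} ↔ n ∈ {n : ℤ | (q : ℤ) + 1 ≤ |n|} := by
    simp [abs_neg]
  by_cases h : n ∈ {n : ℤ | (q : ℤ) + 1 ≤ |n|}
  · rw [Set.indicator_of_mem (hmem.2 h), Set.indicator_of_mem h]
    unfold gaussWeight
    push_cast
    ring_nf
  · rw [Set.indicator_of_notMem (fun hh => h (hmem.1 hh)), Set.indicator_of_notMem h]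

lemma summable_exp_sq (σ : ℝ) (hσ : 0 < σ) :
    Summable fun n : ℕ => Real.exp (-((n:ℝ)+1)^2 / (2*σ^2)) := by
  have h2σ : (0:ℝ) < 2 * σ ^ 2 := by positivity
  have hr1 : Real.exp (-(1/(2*σ^2))) < 1 := by
    rw [Real.exp_lt_one_iff]
    have : (0:ℝ) < 1/(2*σ^2) := by positivity
    linarith
  have hr0 : (0:ℝ) ≤ Real.exp (-(1/(2*σ^2))) := (Real.exp_pos _).le
  have hgeo : Summable fun n : ℕ => Real.exp (-(1/(2*σ^2))) ^ (n+1) := by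
    have h := (summable_geometric_of_lt_one hr0 hr1).mul_right (Real.exp (-(1/(2*σ^2))))
    exact h.congr fun n => (pow_succ _ _).symm
  refine Summable.of_nonneg_of_le (fun n => (Real.exp_pos _).le) (fun n => ?_) hgeo
  rw [← Real.exp_nat_mul]
  apply Real.exp_le_exp.2
  have hn : (0:ℝ) ≤ (n:ℝ) := Nat.cast_nonneg n
  rw [div_le_iff₀ h2σ] at *
  push_cast
  have hkey : ((n:ℝ)+1) ≤ ((n:ℝ)+1)^2 := by nlinarith
  have h1 : ((n:ℝ) + 1) * -(1 / (2 * σ ^ 2)) * (2 * σ ^ 2) = -((n:ℝ)+1) := by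
    field_simp
  rw [h1]
  nlinarith

lemma exp_sq_tsum_le (σ : ℝ) (hσ : 0 < σ) :
    (∑' n : ℕ, Real.exp (-((n:ℝ)+1)^2 / (2*σ^2))) ≤ σ * Real.sqrt (2 * π) / 2 := by
  have hπ : (0:ℝ) < π := Real.pi_pos
  have h2σ : (0:ℝ) < 2 * σ ^ 2 := by positivity
  apply Real.tsum_le_of_sum_range_le (fun n => (Real.exp_pos _).le)
  intro N
  have hb : (0:ℝ) < (2*σ^2)⁻¹ := by positivity
  have hgeq : ∀ x : ℝ, Real.exp (-(2*σ^2)⁻¹ * x^2) = Real.exp (-x^2 / (2*σ^2)) := by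
    intro x; congr 1; field_simp
  have hanti : AntitoneOn (fun x : ℝ => Real.exp (-(2*σ^2)⁻¹ * x^2)) (Set.Icc (0:ℝ) (0 + N)) := by
    intro x hx y hy hxy
    apply Real.exp_le_exp.2
    have hsq : x^2 ≤ y^2 := pow_le_pow_left₀ hx.1 hxy 2
    nlinarith
  have hsum_le := hanti.sum_le_integral
  have hint : MeasureTheory.IntegrableOn (fun x : ℝ => Real.exp (-(2*σ^2)⁻¹ * x^2))
      (Set.Ioi (0:ℝ)) := (integrable_exp_neg_mul_sq hb).integrableOn
  have hIoi : (∫ x in (0:ℝ)..(0 + (N:ℝ)), Real.exp (-(2*σ^2)⁻¹ * x^2))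
      ≤ ∫ x in Set.Ioi (0:ℝ), Real.exp (-(2*σ^2)⁻¹ * x^2) := by
    rw [intervalIntegral.integral_of_le (by positivity)]
    apply MeasureTheory.setIntegral_mono_set hint
    · exact Filter.Eventually.of_forall fun x => (Real.exp_pos _).le
    · exact Filter.Eventually.of_forall fun x hx => hx.1
  have hval : (∫ x in Set.Ioi (0:ℝ), Real.exp (-(2*σ^2)⁻¹ * x^2))
      = σ * Real.sqrt (2 * π) / 2 := by
    rw [integral_gaussian_Ioi]
    congr 1
    rw [show π / (2*σ^2)⁻¹ = (2*π) * σ^2 by field_simp, Real.sqrt_mul (by positivity),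
      Real.sqrt_sq hσ.le]
    ring
  calc (∑ i ∈ Finset.range N, Real.exp (-((i:ℝ)+1)^2 / (2*σ^2)))
      = ∑ i ∈ Finset.range N, Real.exp (-(2*σ^2)⁻¹ * ((0:ℝ) + ((i + 1 : ℕ):ℝ))^2) := by
        refine Finset.sum_congr rfl fun i _ => ?_
        rw [hgeq]
        push_cast
        ring_nf
    _ ≤ ∫ x in (0:ℝ)..(0 + (N:ℝ)), Real.exp (-(2*σ^2)⁻¹ * x^2) := hsum_le
    _ ≤ ∫ x in Set.Ioi (0:ℝ), Real.exp (-(2*σ^2)⁻¹ * x^2) := hIoi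
    _ = σ * Real.sqrt (2 * π) / 2 := hval

lemma gaussTail_summable_pos (σ : ℝ) (hσ : 0 < σ) (q : ℕ) :
    Summable fun n : ℕ => gaussTail σ q ((n:ℤ) + 1) := by
  have hπ : (0:ℝ) < π := Real.pi_pos
  refine Summable.of_nonneg_of_le (fun n => gaussTail_nonneg σ hσ q _) (fun n => ?_)
    (((summable_exp_sq σ hσ)).mul_left (1 / (σ * Real.sqrt (2 * π))))
  refine (gaussTail_le σ hσ q _).trans (le_of_eq ?_)
  unfold gaussWeight
  push_cast
  ring_nf

/-- Gaussian sample-tail bound: the total weight of the Gaussian window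
`w(t) = exp(-t²/(2σ²))/(σ√(2π))` sampled at integers with `|n| ≥ q + 1` is at most
`exp(-q²/(2σ²))`. -/
theorem gaussian_integer_tail_bound (σ : ℝ) (hσ : 0 < σ) (q : ℕ) :
    ∑' n : {n : ℤ // (q : ℤ) + 1 ≤ |n|},
        (1 / (σ * Real.sqrt (2 * π))) * Real.exp (-(((n : ℤ) : ℝ)) ^ 2 / (2 * σ ^ 2)) ≤
      Real.exp (-(q : ℝ) ^ 2 / (2 * σ ^ 2)) := by
  have hπ : (0:ℝ) < π := Real.pi_pos
  have h2σ : (0:ℝ) < 2 * σ ^ 2 := by positivity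
  have hcpos : (0:ℝ) < 1 / (σ * Real.sqrt (2 * π)) := by positivity
  have hFsum1 := gaussTail_summable_pos σ hσ q
  have hFsum2 : Summable fun n : ℕ => gaussTail σ q (-((n:ℤ) + 1)) :=
    hFsum1.congr fun n => (gaussTail_even σ q _).symm ▸ rfl
  have hstep1 : (∑' n : {n : ℤ // (q : ℤ) + 1 ≤ |n|},
      (1 / (σ * Real.sqrt (2 * π))) * Real.exp (-(((n : ℤ) : ℝ)) ^ 2 / (2 * σ ^ 2)))
      = ∑' n : ℤ, gaussTail σ q n := by
    rw [gaussTail, ← tsum_subtype]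
    rfl
  have hF0 : gaussTail σ q 0 = 0 := by
    apply Set.indicator_of_notMem
    simp
  have hstep2 : (∑' n : ℤ, gaussTail σ q n) = 2 * ∑' n : ℕ, gaussTail σ q ((n:ℤ) + 1) := by
    rw [tsum_of_add_one_of_neg_add_one hFsum1 hFsum2, hF0]
    have h : (∑' n : ℕ, gaussTail σ q (-((n:ℤ) + 1))) = ∑' n : ℕ, gaussTail σ q ((n:ℤ) + 1) :=
      tsum_congr fun n => gaussTail_even σ q _
    rw [h]; ring
  have htail : (∑' n : ℕ, gaussTail σ q ((n:ℤ) + 1))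
      ≤ (1 / (σ * Real.sqrt (2 * π))) * Real.exp (-(q : ℝ) ^ 2 / (2 * σ ^ 2))
        * (σ * Real.sqrt (2 * π) / 2) := by
    have hshift := (Summable.sum_add_tsum_nat_add (f := fun n : ℕ => gaussTail σ q ((n:ℤ) + 1)) q
      hFsum1).symm
    have hfin : (∑ i ∈ Finset.range q, gaussTail σ q ((i:ℤ) + 1)) = 0 := by
      refine Finset.sum_eq_zero fun i hi => ?_
      apply Set.indicator_of_notMem
      simp only [Set.mem_setOf_eq, not_le]
      have hi' : i < q := Finset.mem_range.1 hi
      rw [abs_of_nonneg (by positivity)]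
      omega
    rw [hshift, hfin, zero_add]
    have hterm : ∀ n : ℕ, gaussTail σ q (((n + q : ℕ):ℤ) + 1)
        ≤ (1 / (σ * Real.sqrt (2 * π))) * Real.exp (-(q : ℝ) ^ 2 / (2 * σ ^ 2))
          * Real.exp (-((n:ℝ)+1)^2 / (2*σ^2)) := by
      intro n
      refine (gaussTail_le σ hσ q _).trans ?_
      unfold gaussWeight
      rw [mul_assoc, ← Real.exp_add]
      apply mul_le_mul_of_nonneg_left _ hcpos.le
      apply Real.exp_le_exp.2
      rw [← add_div, div_le_div_iff_of_pos_right h2σ]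
      push_cast
      have hn : (0:ℝ) ≤ (n:ℝ) := Nat.cast_nonneg n
      have hq : (0:ℝ) ≤ (q:ℝ) := Nat.cast_nonneg q
      nlinarith [mul_nonneg hn hq]
    calc (∑' n : ℕ, gaussTail σ q (((n + q : ℕ):ℤ) + 1))
        ≤ ∑' n : ℕ, (1 / (σ * Real.sqrt (2 * π))) * Real.exp (-(q : ℝ) ^ 2 / (2 * σ ^ 2))
            * Real.exp (-((n:ℝ)+1)^2 / (2*σ^2)) := by
          refine Summable.tsum_le_tsum hterm ?_ ?_
          · exact (hFsum1.comp_injective (add_left_injective q)).congr fun n => rfl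
          · exact (summable_exp_sq σ hσ).mul_left _
      _ = (1 / (σ * Real.sqrt (2 * π))) * Real.exp (-(q : ℝ) ^ 2 / (2 * σ ^ 2))
            * ∑' n : ℕ, Real.exp (-((n:ℝ)+1)^2 / (2*σ^2)) := tsum_mul_left
      _ ≤ (1 / (σ * Real.sqrt (2 * π))) * Real.exp (-(q : ℝ) ^ 2 / (2 * σ ^ 2))
            * (σ * Real.sqrt (2 * π) / 2) :=
          mul_le_mul_of_nonneg_left (exp_sq_tsum_le σ hσ) (by positivity)
  rw [hstep1, hstep2]
  have hcσ : (1 / (σ * Real.sqrt (2 * π))) * (σ * Real.sqrt (2 * π)) = 1 := by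
    field_simp
  calc 2 * ∑' n : ℕ, gaussTail σ q ((n:ℤ) + 1)
      ≤ 2 * ((1 / (σ * Real.sqrt (2 * π))) * Real.exp (-(q : ℝ) ^ 2 / (2 * σ ^ 2))
          * (σ * Real.sqrt (2 * π) / 2)) := by linarith [htail]
    _ = ((1 / (σ * Real.sqrt (2 * π))) * (σ * Real.sqrt (2 * π)))
          * Real.exp (-(q : ℝ) ^ 2 / (2 * σ ^ 2)) := by ring
    _ = Real.exp (-(q : ℝ) ^ 2 / (2 * σ ^ 2)) := by rw [hcσ, one_mul]
end

section
/- Let $n$ be a positive even integer, let $s_k = \cos\big(\frac{2k-1}{2n}\pi\big)$ and $d_k = \frac{1}{n}(-1)^{k + n/2}\tan\big(\frac{2k-1}{2n}\pi\big)$ for $k = 1, \dots, n$. Then for every polynomial $f$ with real coefficients of degree at most $n - 1$, $\sum_{k=1}^{n} d_k\, f(s_k) = f(0)$. -/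
open scoped Real

open Polynomial Finset


lemma T_deg_coeff : ∀ m : ℕ,
    ((Polynomial.Chebyshev.T ℝ (m : ℤ)).degree ≤ (m : ℕ) ∧
      (Polynomial.Chebyshev.T ℝ (m : ℤ)).coeff m = 2 ^ (m - 1)) ∧
    ((Polynomial.Chebyshev.T ℝ ((m : ℤ) + 1)).degree ≤ ((m + 1 : ℕ) : WithBot ℕ) ∧
      (Polynomial.Chebyshev.T ℝ ((m : ℤ) + 1)).coeff (m + 1) = 2 ^ m) := by
  intro m
  induction m with
  | zero =>
    refine ⟨⟨?_, ?_⟩, ?_, ?_⟩ <;>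
      simp [Polynomial.Chebyshev.T_zero, Polynomial.Chebyshev.T_one]
  | succ m ih =>
    obtain ⟨h1, h2⟩ := ih
    refine ⟨by exact_mod_cast h2, ?_, ?_⟩
    · -- degree (T (m+2)) ≤ m+2
      have hrec := Polynomial.Chebyshev.T_add_two ℝ (m : ℤ)
      have hcast : ((m + 1 : ℕ) : ℤ) + 1 = (m : ℤ) + 2 := by push_cast; ring
      rw [hcast, hrec]
      have hX : ((2 : ℝ[X]) * X).degree ≤ 1 := by
        calc ((2 : ℝ[X]) * X).degree ≤ (2 : ℝ[X]).degree + X.degree := degree_mul_le _ _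
        _ ≤ 0 + 1 := by
            refine add_le_add ?_ (le_of_eq degree_X)
            have : (2 : ℝ[X]) = C 2 := by
              rw [← map_ofNat (C : ℝ →+* ℝ[X]) 2]
            rw [this]; exact degree_C_le
        _ = 1 := by norm_num
      calc (2 * X * Polynomial.Chebyshev.T ℝ ((m:ℤ) + 1) - Polynomial.Chebyshev.T ℝ (m:ℤ)).degree
          ≤ max (2 * X * Polynomial.Chebyshev.T ℝ ((m:ℤ) + 1)).degree (Polynomial.Chebyshev.T ℝ (m:ℤ)).degree := degree_sub_le _ _
        _ ≤ max ((1 : WithBot ℕ) + ((m+1 : ℕ) : WithBot ℕ)) (m : WithBot ℕ) := by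
            refine max_le_max ?_ h1.1
            calc (2 * X * Polynomial.Chebyshev.T ℝ ((m:ℤ) + 1)).degree
                ≤ ((2:ℝ[X]) * X).degree + (Polynomial.Chebyshev.T ℝ ((m:ℤ) + 1)).degree := degree_mul_le _ _
              _ ≤ 1 + ((m+1 : ℕ) : WithBot ℕ) := add_le_add hX h2.1
        _ ≤ ((m + 1 + 1 : ℕ) : WithBot ℕ) := by
            apply max_le
            · have : (1 : WithBot ℕ) + ((m+1 : ℕ) : WithBot ℕ) = ((1 + (m+1) : ℕ) : WithBot ℕ) := by
                push_cast; ring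
              rw [this]
              exact_mod_cast Nat.le_of_eq (by ring)
            · exact_mod_cast Nat.le_succ_of_le (Nat.le_succ m)
    · -- coeff (m+2) (T (m+2)) = 2^(m+1)
      have hrec := Polynomial.Chebyshev.T_add_two ℝ (m : ℤ)
      have hcast : ((m + 1 : ℕ) : ℤ) + 1 = (m : ℤ) + 2 := by push_cast; ring
      rw [hcast, hrec]
      have h2C : (2 : ℝ[X]) = C 2 := by rw [← map_ofNat (C : ℝ →+* ℝ[X]) 2]
      rw [coeff_sub, h2C, mul_assoc, coeff_C_mul, coeff_X_mul]
      have hz : (Polynomial.Chebyshev.T ℝ (m:ℤ)).coeff (m + 1 + 1) = 0 := by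
        apply coeff_eq_zero_of_degree_lt
        refine lt_of_le_of_lt h1.1 ?_
        exact_mod_cast Nat.lt_succ_of_lt (Nat.lt_succ_self m)
      rw [hz, h2.2]
      ring

lemma T_deg_coeff' (m : ℕ) :
    (Polynomial.Chebyshev.T ℝ (m : ℤ)).degree ≤ (m : ℕ) ∧
      (Polynomial.Chebyshev.T ℝ (m : ℤ)).coeff m = 2 ^ (m - 1) :=
  (T_deg_coeff m).1

/-- Chebyshev extrapolation-to-zero weights: for even `n > 0`, Chebyshev nodes
`s_k = cos((2k-1)π/(2n))` and weights `d_k = (1/n)(-1)^{k+n/2} tan((2k-1)π/(2n))`,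
every real polynomial `f` of degree at most `n-1` satisfies
`∑_{k=1}^{n} d_k f(s_k) = f(0)`. -/
theorem chebyshev_extrapolation_weights_exact
    (n : ℕ) (hn : 0 < n) (he : Even n)
    (f : Polynomial ℝ) (hf : f.degree ≤ (n - 1 : ℕ)) :
    ∑ k ∈ Finset.Icc 1 n,
        ((1 / (n : ℝ)) * (-1 : ℝ) ^ (k + n / 2) *
            Real.tan ((2 * (k : ℝ) - 1) / (2 * (n : ℝ)) * π)) *
          f.eval (Real.cos ((2 * (k : ℝ) - 1) / (2 * (n : ℝ)) * π)) =
      f.eval 0 := by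
  obtain ⟨m, hm⟩ := he
  have hm2 : n / 2 = m := by omega
  set θ : ℕ → ℝ := fun k => (2 * (k : ℝ) - 1) / (2 * (n : ℝ)) * π with hθdef
  set v : ℕ → ℝ := fun k => Real.cos (θ k) with hvdef
  set s : Finset ℕ := Finset.Icc 1 n with hsdef
  have hnR : (0:ℝ) < n := by exact_mod_cast hn
  have hcard : s.card = n := by simp [hsdef]
  -- angle facts at nodes
  have hθpos : ∀ k ∈ s, 0 < θ k := by
    intro k hk
    rw [hsdef, Finset.mem_Icc] at hk
    have h1 : (1:ℝ) ≤ k := by exact_mod_cast hk.1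
    have : (0:ℝ) < (2 * (k:ℝ) - 1) / (2 * n) := by
      apply div_pos (by linarith) (by positivity)
    exact mul_pos this Real.pi_pos
  have hθlt : ∀ k ∈ s, θ k < π := by
    intro k hk
    rw [hsdef, Finset.mem_Icc] at hk
    have h2 : (k:ℝ) ≤ n := by exact_mod_cast hk.2
    have : (2 * (k:ℝ) - 1) / (2 * n) < 1 := by
      rw [div_lt_one (by positivity)]; linarith
    calc θ k < 1 * π := by
          exact mul_lt_mul_of_pos_right this Real.pi_pos
      _ = π := one_mul π
  have hθmem : ∀ k ∈ s, θ k ∈ Set.Icc 0 π :=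
    fun k hk => ⟨(hθpos k hk).le, (hθlt k hk).le⟩
  have hsin : ∀ k ∈ s, 0 < Real.sin (θ k) :=
    fun k hk => Real.sin_pos_of_pos_of_lt_pi (hθpos k hk) (hθlt k hk)
  have hcos : ∀ k ∈ s, Real.cos (θ k) ≠ 0 := by
    intro k hk h0
    have hhalf : θ k = π / 2 := by
      have h1 : Real.cos (θ k) = Real.cos (π / 2) := by rw [h0, Real.cos_pi_div_two]
      exact Real.injOn_cos (hθmem k hk) ⟨by positivity, by linarith [Real.pi_pos]⟩ h1
    rw [hθdef] at hhalf
    simp only at hhalf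
    rw [hsdef, Finset.mem_Icc] at hk
    have hhalf2 : (2 * (k:ℝ) - 1) / (2 * n) * π = (1/2) * π := by
      rw [hhalf]; ring
    have h3 := mul_right_cancel₀ Real.pi_ne_zero hhalf2
    have h4 : 2 * (k:ℝ) = (n:ℝ) + 1 := by
      field_simp at h3; linarith
    have h5 : 2 * k = n + 1 := by exact_mod_cast h4
    omega
  have hnθ : ∀ k ∈ s, (n:ℝ) * θ k = (k:ℝ) * π - π/2 := by
    intro k hk
    rw [hθdef]
    field_simp
  have hinj : Set.InjOn v s := by
    intro a ha b hb hab
    have ha' := hθmem a (by simpa [hsdef] using ha)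
    have hb' := hθmem b (by simpa [hsdef] using hb)
    have h := Real.injOn_cos ha' hb' hab
    rw [hθdef] at h
    simp only at h
    have h2 := mul_right_cancel₀ Real.pi_ne_zero h
    field_simp at h2
    exact_mod_cast (by linarith : (a:ℝ) = b)
  -- nodal polynomial identity
  have hTnodal : Polynomial.Chebyshev.T ℝ (n:ℤ) =
      Polynomial.C ((2:ℝ)^(n-1)) * Lagrange.nodal s v := by
    rw [← sub_eq_zero]
    apply Polynomial.eq_zero_of_degree_lt_of_eval_index_eq_zero s hinj
    · rw [hcard, Polynomial.degree_lt_iff_coeff_zero]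
      intro j hj
      rw [coeff_sub, coeff_C_mul]
      rcases eq_or_lt_of_le hj with hj' | hj'
      · rw [← hj']
        have hc1 : (Lagrange.nodal s v).coeff n = 1 := by
          have := Lagrange.nodal_monic (s := s) (v := v)
          have hd : (Lagrange.nodal s v).natDegree = n := by
            rw [Lagrange.natDegree_nodal, hcard]
          rw [← hd]; exact this
        rw [hc1, (T_deg_coeff' n).2, mul_one, sub_self]
      · have hz1 : (Polynomial.Chebyshev.T ℝ (n:ℤ)).coeff j = 0 := by
          apply coeff_eq_zero_of_degree_lt
          exact lt_of_le_of_lt (T_deg_coeff' n).1 (by exact_mod_cast hj')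
        have hz2 : (Lagrange.nodal s v).coeff j = 0 := by
          apply coeff_eq_zero_of_degree_lt
          rw [Lagrange.degree_nodal, hcard]
          exact_mod_cast hj'
        rw [hz1, hz2, mul_zero, sub_zero]
    · intro i hi
      rw [eval_sub, eval_mul, eval_C, Lagrange.eval_nodal_at_node hi, mul_zero, sub_zero]
      show (Polynomial.Chebyshev.T ℝ (n:ℤ)).eval (Real.cos (θ i)) = 0
      rw [Polynomial.Chebyshev.T_real_cos]
      push_cast
      rw [hnθ i hi, Real.cos_sub, Real.cos_pi_div_two, Real.sin_pi_div_two,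
        Real.sin_nat_mul_pi]
      ring
  -- eval of nodal at 0
  have h2pow : ((2:ℝ)^(n-1)) ≠ 0 := by positivity
  have hT0 : (Lagrange.nodal s v).eval 0 = (-1:ℝ)^m / 2^(n-1) := by
    have h := congrArg (Polynomial.eval 0) hTnodal
    rw [eval_mul, eval_C] at h
    have h0 : (Polynomial.Chebyshev.T ℝ (n:ℤ)).eval 0 = (-1:ℝ)^m := by
      have hc : (0:ℝ) = Real.cos (π/2) := by simp
      rw [hc, Polynomial.Chebyshev.T_real_cos]
      have harg : ((n:ℤ):ℝ) * (π/2) = (m:ℝ)*π - 0 := by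
        push_cast
        rw [hm]
        push_cast
        ring
      rw [harg, Real.cos_nat_mul_pi_sub, Real.cos_zero, mul_one]
    rw [h0] at h
    rw [eq_div_iff h2pow]
    linarith
  -- derivative of nodal at nodes
  have hUeval : ∀ i ∈ s, (Polynomial.Chebyshev.U ℝ ((n:ℤ)-1)).eval (v i)
      = (-(-1:ℝ)^i) / Real.sin (θ i) := by
    intro i hi
    have hU := Polynomial.Chebyshev.U_real_cos (θ i) ((n:ℤ)-1)
    have harg : (((n:ℤ)-1:ℤ):ℝ) + 1 = (n:ℝ) := by push_cast; ring
    rw [harg] at hU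
    rw [hnθ i hi] at hU
    rw [Real.sin_nat_mul_pi_sub, Real.sin_pi_div_two, mul_one] at hU
    have hs0 := (hsin i hi).ne'
    field_simp
    exact hU
  have hderiv : ∀ i ∈ s, (Lagrange.nodal s v).derivative.eval (v i)
      = (n:ℝ) * ((-(-1:ℝ)^i) / Real.sin (θ i)) / 2^(n-1) := by
    intro i hi
    have h := congrArg Polynomial.derivative hTnodal
    rw [Polynomial.Chebyshev.T_derivative_eq_U, derivative_C_mul] at h
    have h2 := congrArg (Polynomial.eval (v i)) h
    simp only [eval_mul, eval_C, Polynomial.eval_intCast] at h2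
    rw [hUeval i hi] at h2
    push_cast at h2
    rw [eq_div_iff h2pow]
    linarith
  -- Lagrange interpolation
  have hfdeg : f.degree < (s.card : WithBot ℕ) := by
    rw [hcard]
    refine lt_of_le_of_lt hf ?_
    exact_mod_cast Nat.sub_lt hn Nat.one_pos
  have hinterp := Lagrange.eq_interpolate hinj hfdeg
  have hx : ∀ i ∈ s, (0:ℝ) ≠ v i := by
    intro i hi h
    exact hcos i hi h.symm
  have heval := Lagrange.eval_interpolate_not_at_node (x := (0:ℝ))
    (fun i => f.eval (v i)) hx
  rw [← hinterp] at heval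
  rw [show f.eval 0 = Polynomial.eval 0 f from rfl, heval, Finset.mul_sum]
  apply Finset.sum_congr rfl
  intro k hk
  have hrw : Polynomial.eval 0 (Lagrange.nodal s v) *
      (Lagrange.nodalWeight s v k * (0 - v k)⁻¹ * Polynomial.eval (v k) f)
      = (Polynomial.eval 0 (Lagrange.nodal s v) *
        (Lagrange.nodalWeight s v k * (0 - v k)⁻¹)) * Polynomial.eval (v k) f := by
    ring
  rw [hrw]
  congr 1
  rw [Lagrange.nodalWeight_eq_eval_derivative_nodal hk, hderiv k hk, hT0, hm2]
  show (1/(n:ℝ)) * (-1:ℝ)^(k+m) * Real.tan (θ k) = _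
  rw [Real.tan_eq_sin_div_cos]
  have hsk := (hsin k hk).ne'
  have hck := hcos k hk
  have hn0 : (n:ℝ) ≠ 0 := hnR.ne'
  have hvk : v k = Real.cos (θ k) := rfl
  rw [hvk]
  have ha : ((-1:ℝ)^k) * ((-1:ℝ)^k) = 1 := by
    rw [← pow_add, ← two_mul, pow_mul]; norm_num
  have hb : ((-1:ℝ)^m) * ((-1:ℝ)^m) = 1 := by
    rw [← pow_add, ← two_mul, pow_mul]; norm_num
  rw [pow_add]
  field_simp
  ring_nf
  rw [show ((-1:ℝ))^(k*2) = 1 by rw [mul_comm, pow_mul]; norm_num]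
  ring
end
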